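/- Let (h, (α_i), (h_i)) be a realization of a symmetrizable matrix A with symmetrizer (d_i). Then there exists a nondegenerate symmetric bilinear form (·,·) on h such that (x, h_i) = d_i⁻¹ · α_i(x) for all x ∈ h and all i = 1, …, n. -/

import Mathlib

open Module Submodule Finset


/- STATEMENT 11: Let `(H, (α_i), (co_i))` be a realization of a symmetrizable
`n × n` matrix `A` with symmetrizer `(d_i)` (so `d_i ≠ 0`,
`d_i A_{ij} = d_j A_{ji}`, `dim H = 2n - rank A`, the `α_i ∈ H*` and the
`co_i ∈ H` are linearly independent, and `α_i(co_j) = A_{ji}`).  Then there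
exists a nondegenerate symmetric bilinear form `(·,·)` on `H` with
`(x, co_i) = d_i⁻¹ · α_i(x)` for all `x ∈ H` and all `i`. -/
theorem statement11
    {k : Type*} [Field k] [CharZero k]
    (n : ℕ) (hn : 0 < n)
    (A : Matrix (Fin n) (Fin n) k)
    (d : Fin n → k) (hd : ∀ i, d i ≠ 0)
    (hsym : ∀ i j, d i * A i j = d j * A j i)
    (H : Type*) [AddCommGroup H] [Module k H] [FiniteDimensional k H]
    (hdim : Module.finrank k H = 2 * n - A.rank)
    (α : Fin n → Module.Dual k H) (hα : LinearIndependent k α)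
    (co : Fin n → H) (hco : LinearIndependent k co)
    (hpair : ∀ i j, α i (co j) = A j i) :
    ∃ B : H →ₗ[k] H →ₗ[k] k,
      (∀ x y : H, B x y = B y x) ∧
      (∀ x : H, (∀ y : H, B x y = 0) → x = 0) ∧
      (∀ (x : H) (i : Fin n), B x (co i) = (d i)⁻¹ * α i x) := by
  classical
  -- complement
  set S := Submodule.span k (Set.range co) with hS
  obtain ⟨W, hWc⟩ := S.exists_isCompl
  set π : H →ₗ[k] S := S.linearProjOfIsCompl W hWc with hπ
  set b : Basis (Fin n) k S := Basis.span hco with hb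
  set c : Fin n → (H →ₗ[k] k) := fun i => (b.coord i).comp π with hcdef
  have hc_co : ∀ i j, c j (co i) = if i = j then 1 else 0 := by
    intro i j
    have hmem : co i ∈ S := Submodule.subset_span ⟨i, rfl⟩
    have hπco : π (co i) = b i := by
      have h1 : π (co i) = ⟨co i, hmem⟩ :=
        Submodule.linearProjOfIsCompl_apply_left hWc ⟨co i, hmem⟩
      rw [h1]; ext; exact (congrArg Subtype.val (Basis.span_apply hco i)).symm
    simp [hcdef, hπco, Basis.coord_apply, Basis.repr_self, Finsupp.single_apply]
  have hdsym : ∀ i j, (d j)⁻¹ * A i j = (d i)⁻¹ * A j i := by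
    intro i j
    rw [inv_mul_eq_div, inv_mul_eq_div, div_eq_div_iff (hd j) (hd i)]
    linear_combination hsym i j
  set m2 : (H →ₗ[k] k) → (H →ₗ[k] k) → (H →ₗ[k] H →ₗ[k] k) :=
    fun f g => ((LinearMap.mul k k).comp f).compl₂ g with hm2
  have m2_apply : ∀ f g x y, m2 f g x y = f x * g y := fun f g x y => rfl
  set B : H →ₗ[k] H →ₗ[k] k :=
    (∑ i, (d i)⁻¹ • (m2 (c i) (α i) + m2 (α i) (c i)))
    - ∑ i, ∑ j, ((d j)⁻¹ * A i j) • m2 (c i) (c j) with hBdef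
  have hB : ∀ x y, B x y = (∑ i, ((d i)⁻¹ * (c i x * α i y) + (d i)⁻¹ * (α i x * c i y)))
      - ∑ i, ∑ j, (d j)⁻¹ * A i j * (c i x * c j y) := by
    intro x y
    simp [hBdef, LinearMap.sub_apply, LinearMap.sum_apply, LinearMap.smul_apply,
      LinearMap.add_apply, m2_apply, smul_eq_mul, mul_add, mul_assoc]
  have key : ∀ (x : H) (i : Fin n), B x (co i) = (d i)⁻¹ * α i x := by
    intro x i
    rw [hB]
    have h2 : ∀ j, α j (co i) = A i j := fun j => hpair j i
    have h3 : ∀ j, (d i)⁻¹ * A j i * c j x = (d j)⁻¹ * (c j x * A i j) := by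
      intro j
      rw [← hdsym i j]; ring
    simp only [h2, hc_co, mul_ite, mul_one, mul_zero, Finset.sum_ite_eq,
      Finset.mem_univ, if_true, Finset.sum_add_distrib]
    simp only [h3]
    ring
  have hsymB : ∀ x y, B x y = B y x := by
    intro x y
    rw [hB, hB]
    congr 1
    · exact Finset.sum_congr rfl fun i _ => by ring
    · conv_rhs => rw [Finset.sum_comm]
      exact Finset.sum_congr rfl fun a _ => Finset.sum_congr rfl fun b' _ => by
        rw [hdsym a b']; ring
  -- the map to coordinates
  set Φ : H →ₗ[k] (Fin n → k) := LinearMap.pi α with hΦdef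
  have hΦapp : ∀ x i, Φ x i = α i x := fun x i => rfl
  have hfapp : ∀ (f : Module.Dual k (Fin n → k)) (g : Fin n → k),
      f g = ∑ i, g i * f (Pi.single i 1) := by
    intro f g
    conv_lhs => rw [← Finset.univ_sum_single g]
    rw [map_sum]
    refine Finset.sum_congr rfl fun i _ => ?_
    have hsingle : Pi.single i (g i) = g i • (Pi.single i 1 : Fin n → k) := by
      funext j
      simp only [Pi.single_apply, Pi.smul_apply, smul_eq_mul]
      split <;> simp
    rw [hsingle, map_smul, smul_eq_mul]
  have hΦsurj : LinearMap.range Φ = ⊤ := by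
    by_contra hne
    obtain ⟨f, hf0, hfbot⟩ := Submodule.exists_dual_map_eq_bot_of_lt_top
      (lt_top_iff_ne_top.mpr hne) inferInstance
    have hfz : ∀ x : H, f (Φ x) = 0 := by
      intro x
      have hmem : f (Φ x) ∈ (LinearMap.range Φ).map f :=
        Submodule.mem_map_of_mem ⟨x, rfl⟩
      rwa [hfbot, Submodule.mem_bot] at hmem
    have hcomb : ∑ i, f (Pi.single i 1) • α i = 0 := by
      ext x
      have h1 := hfz x
      rw [hfapp f (Φ x)] at h1
      simpa [hΦapp, mul_comm] using h1
    have hzero := Fintype.linearIndependent_iff.mp hα _ hcomb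
    apply hf0
    refine LinearMap.ext fun g => ?_
    rw [hfapp f g]
    simp [hzero]
  -- dimension count
  have hl_le : A.rank ≤ n := by simpa using A.rank_le_card_width
  have hfinS : finrank k ↥S = n := by simpa [hS] using finrank_span_eq_card hco
  have hfinW : finrank k ↥W = n - A.rank := by
    have h1 := Submodule.finrank_add_eq_of_isCompl hWc
    rw [hfinS, hdim] at h1
    omega
  have hU : Submodule.map Φ S = Submodule.span k (Set.range A) := by
    rw [hS, Submodule.map_span, ← Set.range_comp]
    have h1 : Φ ∘ co = fun i => A i := by
      funext i j
      simp [hΦapp, hpair j i]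
    rw [h1]
  have hfinU : finrank k ↥(Submodule.map Φ S) = A.rank := by
    rw [hU]; exact (Matrix.rank_eq_finrank_span_row A).symm
  have hfinV_le : finrank k ↥(Submodule.map Φ W) ≤ n - A.rank := by
    rw [← hfinW]; exact Submodule.finrank_map_le Φ W
  have hsup : Submodule.map Φ S ⊔ Submodule.map Φ W = ⊤ := by
    rw [← Submodule.map_sup, hWc.sup_eq_top, Submodule.map_top, hΦsurj]
  have hdims := Submodule.finrank_sup_add_finrank_inf_eq (Submodule.map Φ S)
    (Submodule.map Φ W)
  rw [hsup, finrank_top, hfinU] at hdims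
  have hfinpi : finrank k (Fin n → k) = n := by simp
  rw [hfinpi] at hdims
  have hinf : Submodule.map Φ S ⊓ Submodule.map Φ W = ⊥ :=
    Submodule.finrank_eq_zero.mp (by omega)
  have hfinV : finrank k ↥(Submodule.map Φ W) = n - A.rank := by omega
  -- injectivity of Φ on W
  have hinjW : ∀ w ∈ W, Φ w = 0 → w = 0 := by
    intro w hw hΦw
    set f : ↥W →ₗ[k] (Fin n → k) := Φ.comp W.subtype with hfdef
    have hrange : LinearMap.range f = Submodule.map Φ W := by
      rw [hfdef, LinearMap.range_comp, Submodule.range_subtype]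
    have h1 := LinearMap.finrank_range_add_finrank_ker f
    rw [hrange, hfinV, hfinW] at h1
    have hker : LinearMap.ker f = ⊥ := Submodule.finrank_eq_zero.mp (by omega)
    have : (⟨w, hw⟩ : ↥W) ∈ LinearMap.ker f := by
      simp [hfdef, LinearMap.mem_ker, hΦw]
    rw [hker, Submodule.mem_bot] at this
    exact congrArg Subtype.val this
  refine ⟨B, hsymB, ?_, key⟩
  intro x hx
  have hαx : ∀ i, α i x = 0 := by
    intro i
    have h1 := hx (co i)
    rw [key x i] at h1
    exact (mul_eq_zero.mp h1).resolve_left (inv_ne_zero (hd i))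
  have hΦx : Φ x = 0 := by
    funext i; simpa [hΦapp] using hαx i
  -- decompose x
  have hππ : π ((π x : ↥S) : H) = π x := Submodule.linearProjOfIsCompl_apply_left hWc (π x)
  have hxw : x - ((π x : ↥S) : H) ∈ W := by
    rw [← Submodule.linearProjOfIsCompl_ker hWc]
    rw [LinearMap.mem_ker, map_sub]; exact sub_eq_zero.mpr hππ.symm
  have hΦu : Φ ((π x : ↥S) : H) = 0 := by
    have hmem : Φ ((π x : ↥S) : H) ∈ Submodule.map Φ S ⊓ Submodule.map Φ W := by
      constructor
      · exact Submodule.mem_map_of_mem (π x).2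
      · have : Φ ((π x : ↥S) : H) = -Φ (x - ((π x : ↥S) : H)) := by
          rw [map_sub, hΦx, zero_sub, neg_neg]
        rw [this]
        exact Submodule.neg_mem _ (Submodule.mem_map_of_mem hxw)
    rwa [hinf, Submodule.mem_bot] at hmem
  have hwz : x - ((π x : ↥S) : H) = 0 := by
    apply hinjW _ hxw
    rw [map_sub, hΦx, hΦu, sub_self]
  have hxS : x ∈ S := by
    have : x = ((π x : ↥S) : H) := by
      have := sub_eq_zero.mp hwz; exact this
    rw [this]; exact (π x).2
  -- coordinates of x
  have hπx : π x = ⟨x, hxS⟩ := Submodule.linearProjOfIsCompl_apply_left hWc ⟨x, hxS⟩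
  have hxsum : x = ∑ i, c i x • co i := by
    have h2 := b.sum_repr ⟨x, hxS⟩
    have hcoe : ∀ i, ((b i : ↥S) : H) = co i := fun i => congrArg Subtype.val (Basis.span_apply hco i)
    have hci : ∀ i, c i x = b.repr ⟨x, hxS⟩ i := fun i => by
      simp [hcdef, hπx, Basis.coord_apply]
    calc x = ((⟨x, hxS⟩ : ↥S) : H) := rfl
      _ = ((∑ i, b.repr ⟨x, hxS⟩ i • b i : ↥S) : H) := by rw [h2]
      _ = ∑ i, (b.repr ⟨x, hxS⟩ i) • ((b i : ↥S) : H) := by simp only [Submodule.coe_sum, Submodule.coe_smul]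
      _ = ∑ i, c i x • co i := Finset.sum_congr rfl fun i _ => by rw [hcoe, hci]
  have hrow : ∀ j, ∑ i, c i x * A i j = 0 := by
    intro j
    have h1 : α j x = ∑ i, c i x * A i j := by
      conv_lhs => rw [hxsum]
      rw [map_sum]
      exact Finset.sum_congr rfl fun i _ => by rw [map_smul, smul_eq_mul, hpair j i]
    rw [← h1, hαx j]
  have hcomb2 : ∑ i, ((d i)⁻¹ * c i x) • α i = 0 := by
    ext y
    have h1 := hx y
    rw [hB] at h1
    have h2 : ∑ i, ∑ j, (d j)⁻¹ * A i j * (c i x * c j y)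
        = ∑ j, (d j)⁻¹ * c j y * (∑ i, c i x * A i j) := by
      rw [Finset.sum_comm]
      refine Finset.sum_congr rfl fun j _ => ?_
      rw [Finset.mul_sum]
      exact Finset.sum_congr rfl fun i _ => by ring
    simp only [hαx, mul_zero, zero_mul, add_zero, h2, hrow, mul_zero,
      Finset.sum_const_zero, sub_zero] at h1
    simpa [smul_eq_mul, mul_assoc] using h1
  have hzero := Fintype.linearIndependent_iff.mp hα _ hcomb2
  have hcz : ∀ i, c i x = 0 := by
    intro i
    have := hzero i
    rcases mul_eq_zero.mp this with h | h
    · exact absurd h (inv_ne_zero (hd i))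
    · exact h
  rw [hxsum]
  simp [hcz]
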